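/- (Corollary 2.) Let n ≥ 1, let A be an n×n real sub-generator matrix, α ∈ ℝⁿ a probability vector, μ, γ_V, γ_R, ρ_J, μ_J > 0 with τ = αᵀ(μI−A)⁻¹((−A)𝟙) > 0, and let φ > 0. Consider the equilibrium equations (E1)–(E4) with the recruitment value in (E1) given by φ·V (i.e. φ·V − (ρ_J+μ_J)·J = 0). Then there exists a solution (J, B, V, R) with V > 0 if and only if φ = ϱ, i.e. if and only if the basic offspring number N₀ = φ/ϱ equals 1. -/

import Mathlib

open Matrix

/-- The survival-and-exit probability `τ = αᵀ (μI − A)⁻¹ ((−A)𝟙)`. -/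
noncomputable def tau {n : ℕ} (A : Matrix (Fin n) (Fin n) ℝ) (α : Fin n → ℝ) (μ : ℝ) : ℝ :=
  α ⬝ᵥ ((μ • (1 : Matrix (Fin n) (Fin n) ℝ) - A)⁻¹ *ᵥ ((-A) *ᵥ (1 : Fin n → ℝ)))

/-- The average number of gonotrophic cycles `n_G`. -/
noncomputable def nG {n : ℕ} (A : Matrix (Fin n) (Fin n) ℝ) (α : Fin n → ℝ)
    (μ γV γR : ℝ) : ℝ :=
  (1 - tau A α μ * (γR / (μ + γR)) * (γV / (μ + γV)))⁻¹

/-- The threshold quantity `ϱ`. -/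
noncomputable def varrho {n : ℕ} (A : Matrix (Fin n) (Fin n) ℝ) (α : Fin n → ℝ)
    (μ γV γR ρJ μJ : ℝ) : ℝ :=
  (tau A α μ * (1 / (μ + γV)) * (ρJ / (ρJ + μJ)) * nG A α μ γV γR)⁻¹

lemma alg (t μ γV γR ρJ μJ φ : ℝ) (hμ : 0 < μ) (hγV : 0 < γV) (hγR : 0 < γR)
    (hρJ : 0 < ρJ) (hμJ : 0 < μJ) (ht : 0 < t) :
    t * (ρJ * φ / (ρJ + μJ) + γR * γV / (γR + μ)) = γV + μ ↔
    φ = (t * (1/(μ+γV)) * (ρJ/(ρJ+μJ)) * (1 - t * (γR/(μ+γR)) * (γV/(μ+γV)))⁻¹)⁻¹ := by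
  have h1 : μ + γR ≠ 0 := by positivity
  have h2 : μ + γV ≠ 0 := by positivity
  have h3 : ρJ + μJ ≠ 0 := by positivity
  have h4 : γR + μ ≠ 0 := by positivity
  have ht' : t ≠ 0 := ne_of_gt ht
  have hρ' : ρJ ≠ 0 := ne_of_gt hρJ
  set ψ : ℝ := (t * (1/(μ+γV)) * (ρJ/(ρJ+μJ)) * (1 - t * (γR/(μ+γR)) * (γV/(μ+γV)))⁻¹)⁻¹ with hψ
  have hψ' : ψ = (1 - t * (γR/(μ+γR)) * (γV/(μ+γV))) * (t * (1/(μ+γV)) * (ρJ/(ρJ+μJ)))⁻¹ := by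
    rw [hψ, _root_.mul_inv_rev, inv_inv]
  have hsat : t * (ρJ * ψ / (ρJ + μJ) + γR * γV / (γR + μ)) = γV + μ := by
    rw [hψ']
    field_simp
    ring
  constructor
  · intro h
    have h6 : t * (ρJ * φ / (ρJ + μJ)) = t * (ρJ * ψ / (ρJ + μJ)) := by linarith
    have h7 : ρJ * φ / (ρJ + μJ) = ρJ * ψ / (ρJ + μJ) := mul_left_cancel₀ ht' h6
    rw [div_left_inj' h3] at h7
    exact mul_left_cancel₀ hρ' h7
  · intro h; rw [h]; exact hsat

/-- **Corollary 2.** For the per-capita recruitment function `φ(V,J) = φ·V`,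
the equilibrium equations (E1)–(E4) (with recruitment value `φ·V` in (E1)) have
a solution with `V > 0` if and only if `φ = ϱ`, i.e. if and only if the basic
offspring number `N₀ = φ/ϱ` equals one. -/
theorem positive_equilibrium_iff_varrho
    (n : ℕ) (hn : 1 ≤ n) (A : Matrix (Fin n) (Fin n) ℝ)
    (hoff : ∀ i j, i ≠ j → 0 ≤ A i j)
    (hrow : ∀ i, ∑ j, A i j ≤ 0)
    (α : Fin n → ℝ) (hα0 : ∀ i, 0 ≤ α i) (hα1 : ∑ i, α i = 1)
    (μ γV γR ρJ μJ : ℝ)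
    (hμ : 0 < μ) (hγV : 0 < γV) (hγR : 0 < γR) (hρJ : 0 < ρJ) (hμJ : 0 < μJ)
    (hτ : 0 < tau A α μ) (φ : ℝ) (hφ : 0 < φ) :
    (∃ (J V R : ℝ) (B : Fin n → ℝ), 0 < V ∧
        φ * V - (ρJ + μJ) * J = 0 ∧
        (ρJ * J + γR * R) • α + Aᵀ *ᵥ B - μ • B = 0 ∧
        ((-A) *ᵥ (1 : Fin n → ℝ)) ⬝ᵥ B - (γV + μ) * V = 0 ∧
        γV * V - (γR + μ) * R = 0) ↔
      φ = varrho A α μ γV γR ρJ μJ := by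
  simp only [varrho, nG]
  have h3 : ρJ + μJ ≠ 0 := by positivity
  have h4 : γR + μ ≠ 0 := by positivity
  set M := μ • (1 : Matrix (Fin n) (Fin n) ℝ) - A with hM
  set w := (-A) *ᵥ (1 : Fin n → ℝ) with hw
  have hdet : IsUnit M.det := by
    by_contra hd
    have h0 : M⁻¹ = 0 := Matrix.nonsing_inv_apply_not_isUnit _ hd
    rw [tau, ← hM, ← hw, h0] at hτ
    simp at hτ
  have hMT : Mᵀ = μ • (1 : Matrix (Fin n) (Fin n) ℝ) - Aᵀ := by
    rw [hM]; simp
  have key := alg (tau A α μ) μ γV γR ρJ μJ φ hμ hγV hγR hρJ hμJ hτ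
  constructor
  · rintro ⟨J, V, R, B, hV, e1, e2, e3, e4⟩
    have e2' : Mᵀ *ᵥ B = (ρJ * J + γR * R) • α := by
      rw [hMT, Matrix.sub_mulVec, Matrix.smul_mulVec, Matrix.one_mulVec]
      have h5 : (ρJ * J + γR * R) • α + Aᵀ *ᵥ B = μ • B := sub_eq_zero.mp e2
      rw [← h5]; abel
    have hct : (ρJ * J + γR * R) * tau A α μ = (γV + μ) * V := by
      have hBw : w ⬝ᵥ B = (γV + μ) * V := by linarith [e3]
      calc (ρJ * J + γR * R) * tau A α μ
          = ((ρJ * J + γR * R) • α) ⬝ᵥ (M⁻¹ *ᵥ w) := by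
            rw [tau, ← hM, ← hw, smul_dotProduct]; rfl
        _ = (Mᵀ *ᵥ B) ⬝ᵥ (M⁻¹ *ᵥ w) := by rw [e2']
        _ = (B ᵥ* M) ⬝ᵥ (M⁻¹ *ᵥ w) := by rw [Matrix.mulVec_transpose]
        _ = B ⬝ᵥ (M *ᵥ (M⁻¹ *ᵥ w)) := (Matrix.dotProduct_mulVec _ _ _).symm
        _ = B ⬝ᵥ ((M * M⁻¹) *ᵥ w) := by rw [Matrix.mulVec_mulVec]
        _ = B ⬝ᵥ w := by rw [Matrix.mul_nonsing_inv _ hdet, Matrix.one_mulVec]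
        _ = w ⬝ᵥ B := dotProduct_comm _ _
        _ = (γV + μ) * V := hBw
    have hJ : J = φ * V / (ρJ + μJ) := by field_simp; linarith [e1]
    have hR : R = γV * V / (γR + μ) := by field_simp; linarith [e4]
    apply key.mp
    apply mul_right_cancel₀ (ne_of_gt hV)
    rw [hJ, hR] at hct
    field_simp at hct ⊢
    linear_combination hct
  · intro h
    set c : ℝ := ρJ * (φ / (ρJ + μJ)) + γR * (γV / (γR + μ)) with hc
    set v : Fin n → ℝ := (M⁻¹)ᵀ *ᵥ α with hv
    refine ⟨φ / (ρJ + μJ), 1, γV / (γR + μ), c • v, one_pos, by field_simp; ring, ?_, ?_, by field_simp; ring⟩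
    · have h2 : Mᵀ *ᵥ v = α := by
        rw [hv, Matrix.mulVec_mulVec, ← Matrix.transpose_mul, Matrix.nonsing_inv_mul _ hdet,
          Matrix.transpose_one, Matrix.one_mulVec]
      rw [hMT, Matrix.sub_mulVec, Matrix.smul_mulVec, Matrix.one_mulVec] at h2
      rw [Matrix.mulVec_smul, ← h2]
      module
    · have hwv : w ⬝ᵥ v = tau A α μ := by
        calc w ⬝ᵥ v = v ⬝ᵥ w := dotProduct_comm _ _
          _ = (α ᵥ* M⁻¹) ⬝ᵥ w := by rw [hv, Matrix.mulVec_transpose]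
          _ = α ⬝ᵥ (M⁻¹ *ᵥ w) := (Matrix.dotProduct_mulVec _ _ _).symm
          _ = tau A α μ := by rw [tau, ← hM, ← hw]
      have hsat := key.mpr h
      rw [dotProduct_smul, hwv]
      simp only [smul_eq_mul]
      rw [hc]
      linear_combination hsat
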